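/- For every ξ ∈ ℝⁿ with 0 < |ξ| < ε, the eigenvalue λ₊(ξ) satisfies −4(2−√2)·|ξ|^{2(α−θ)} ≤ λ₊(ξ) ≤ −|ξ|^{2(α−θ)}. -/

import Mathlib

set_option maxHeartbeats 1000000


/-- The eigenvalue `λ₊(ξ)` in the real-eigenvalue (low frequency) regime. -/
noncomputable def lamPlus (n : ℕ) (δ α θ : ℝ) (ξ : EuclideanSpace ℝ (Fin n)) : ℝ :=
  ‖ξ‖ ^ (2 * θ) / (2 * (1 + ‖ξ‖ ^ (2 * δ))) *
    (-1 + Real.sqrt (1 - 4 * ‖ξ‖ ^ (2 * (α - 2 * θ)) * (1 + ‖ξ‖ ^ (2 * δ))))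

theorem stmt_1 (n : ℕ) (hn : 1 ≤ n) (δ α θ ε : ℝ)
    (hδ : 0 ≤ δ) (hα : 0 < α) (hθ : 0 ≤ θ) (hθα : 2 * θ < α)
    (hε : 0 < ε) (hεdef : ε ^ (α - 2 * θ) = 1 / 4) :
    ∀ ξ : EuclideanSpace ℝ (Fin n), 0 < ‖ξ‖ → ‖ξ‖ < ε →
      -4 * (2 - Real.sqrt 2) * ‖ξ‖ ^ (2 * (α - θ)) ≤ lamPlus n δ α θ ξ ∧
        lamPlus n δ α θ ξ ≤ -‖ξ‖ ^ (2 * (α - θ)) := by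
  intro ξ hξ0 hξε
  set r := ‖ξ‖ with hrdef
  have hexp : 0 < α - 2 * θ := by linarith
  have hε1 : ε < 1 := by
    by_contra h
    push_neg at h
    have : (1 : ℝ) ≤ ε ^ (α - 2 * θ) := Real.one_le_rpow h (by linarith)
    rw [hεdef] at this; linarith
  have hr1 : r < 1 := lt_trans hξε hε1
  set s := r ^ (2 * (α - 2 * θ)) with hsdef
  have hs0 : 0 < s := Real.rpow_pos_of_pos hξ0 _
  have hs : s < 1 / 16 := by
    have h1 : r ^ (α - 2 * θ) < ε ^ (α - 2 * θ) :=
      Real.rpow_lt_rpow (norm_nonneg ξ) hξε hexp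
    rw [hεdef] at h1
    have h2 : s = (r ^ (α - 2 * θ)) ^ (2 : ℕ) := by
      rw [hsdef, ← Real.rpow_natCast (r ^ (α - 2 * θ)) 2,
        ← Real.rpow_mul (norm_nonneg ξ)]
      norm_num
      ring_nf
      rfl
    rw [h2]
    nlinarith [Real.rpow_pos_of_pos hξ0 (α - 2 * θ)]
  have hDpow : r ^ (2 * δ) ≤ 1 :=
    Real.rpow_le_one (norm_nonneg ξ) hr1.le (by linarith)
  have hDpow0 : 0 < r ^ (2 * δ) := Real.rpow_pos_of_pos hξ0 _
  set D := 1 + r ^ (2 * δ) with hDdef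
  have hD1 : 1 ≤ D := by simp [hDdef]; linarith
  have hD2 : D ≤ 2 := by simp [hDdef]; linarith
  have hD0 : 0 < D := by linarith
  set x := 4 * s * D with hxdef
  have hx0 : 0 < x := by
    rw [hxdef]; positivity
  have hx1 : x ≤ 1 / 2 := by nlinarith
  have hu0 := Real.sqrt_nonneg (1 - x)
  have hu1 : Real.sqrt (1 - x) ≤ 1 := by
    exact Real.sqrt_le_one.mpr (by linarith)
  have husq : Real.sqrt (1 - x) ^ 2 = 1 - x :=
    Real.sq_sqrt (by linarith)
  have hsq1 : 1 - x ≤ Real.sqrt (1 - x) := by nlinarith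
  have hsq2 : Real.sqrt (1 - x) ≤ 1 - x / 2 := by
    have h := Real.sqrt_le_sqrt (show 1 - x ≤ (1 - x / 2) ^ 2 by nlinarith)
    rwa [Real.sqrt_sq (by linarith)] at h
  have hlam : lamPlus n δ α θ ξ =
      r ^ (2 * θ) / (2 * D) * (-1 + Real.sqrt (1 - x)) := rfl
  have hc0 : 0 < r ^ (2 * θ) := Real.rpow_pos_of_pos hξ0 _
  have hcpos : 0 < r ^ (2 * θ) / (2 * D) := by positivity
  have hpow : r ^ (2 * θ) * s = r ^ (2 * (α - θ)) := by
    rw [hsdef, ← Real.rpow_add hξ0]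
    congr 1; ring
  have heq1 : r ^ (2 * θ) / (2 * D) * (-x / 2) = -(r ^ (2 * θ) * s) := by
    rw [hxdef]; field_simp; ring
  have heq2 : r ^ (2 * θ) / (2 * D) * (-x) = -2 * (r ^ (2 * θ) * s) := by
    rw [hxdef]; field_simp; ring
  have hsqrt2 : Real.sqrt 2 ≤ 3 / 2 := by
    have h : Real.sqrt 2 ≤ Real.sqrt ((3 / 2) ^ 2) :=
      Real.sqrt_le_sqrt (by norm_num)
    rwa [Real.sqrt_sq (by norm_num)] at h
  clear_value x D s r
  constructor
  · rw [hlam]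
    have hlow : r ^ (2 * θ) / (2 * D) * (-x) ≤
        r ^ (2 * θ) / (2 * D) * (-1 + Real.sqrt (1 - x)) := by
      apply mul_le_mul_of_nonneg_left (by linarith) hcpos.le
    rw [heq2, hpow] at hlow
    have hppos : 0 < r ^ (2 * (α - θ)) := Real.rpow_pos_of_pos hξ0 _
    have hmul : 0 ≤ (3 / 2 - Real.sqrt 2) * r ^ (2 * (α - θ)) :=
      mul_nonneg (by linarith) hppos.le
    linarith
  · rw [hlam]
    have hhigh : r ^ (2 * θ) / (2 * D) * (-1 + Real.sqrt (1 - x)) ≤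
        r ^ (2 * θ) / (2 * D) * (-x / 2) := by
      apply mul_le_mul_of_nonneg_left (by linarith) hcpos.le
    rw [heq1, hpow] at hhigh
    exact hhigh
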